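/- Let G be a Lie group, V a finite-dimensional vector space, and τ ∈ Ω¹(G×G,V) a 1-form satisfying the simplicial cocycle condition pr₂₃*τ − (m×id)*τ + (id×m)*τ − pr₁₂*τ = 0 on G³. Define κ: G × 𝔤 → V by κ(g,v) := τ_{(g⁻¹,1)}(0 ⊕ v) + τ_{(g⁻¹,g)}(dL_{g⁻¹}v ⊕ 0), where 0 ⊕ v and dL_{g⁻¹}v ⊕ 0 are tangent vectors to G×G. Then κ is a continuous group 1-cocycle with values in 𝔤* ⊗ V: κ(g₁g₂,v) = κ(g₁,v) + κ(g₂, Ad(g₁⁻¹)v) for all g₁,g₂ ∈ G, v ∈ 𝔤. -/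
import Mathlib


/-!
STATEMENT 6: Let G be a Lie group, V a finite-dimensional vector space, and τ ∈ Ω¹(G×G,V)
satisfying the simplicial cocycle condition pr₂₃*τ − (m×id)*τ + (id×m)*τ − pr₁₂*τ = 0 on G³.
Define κ(g,v) := τ_{(g⁻¹,1)}(0 ⊕ v) + τ_{(g⁻¹,g)}(dL_{g⁻¹}v ⊕ 0).  Then κ is a continuous
group 1-cocycle with values in 𝔤* ⊗ V:
κ(g₁g₂,v) = κ(g₁,v) + κ(g₂, Ad(g₁⁻¹)v).

Model: G = Mˣ, the units of a (normed) ℝ-algebra M, so that 𝔤 = M, tangent vectors at any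
point are elements of M, dL_{g⁻¹}v = g⁻¹·v, Ad(g₁⁻¹)v = g₁⁻¹·v·g₁, and the pushforward of a
tangent vector (x₁,x₂) under the multiplication map is x₁·g₂ + g₁·x₂.  The 1-form τ is a
family of linear maps `τ : M × M → (M × M →ₗ[ℝ] V)`.
-/

theorem stmt6 {M : Type*} [Ring M] [Algebra ℝ M]
    {V : Type*} [AddCommGroup V] [Module ℝ V] [Module.Finite ℝ V]
    (τ : M × M → (M × M →ₗ[ℝ] V))
    -- the simplicial cocycle condition δτ = 0 on G³, evaluated on tangent vectors
    (hτ : ∀ (g₁ g₂ g₃ : Mˣ) (u : M × M × M),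
      τ ((↑g₂ : M), (↑g₃ : M)) (u.2.1, u.2.2)
        - τ ((↑g₁ : M) * ↑g₂, (↑g₃ : M)) (u.1 * ↑g₂ + ↑g₁ * u.2.1, u.2.2)
        + τ ((↑g₁ : M), (↑g₂ : M) * ↑g₃) (u.1, u.2.1 * ↑g₃ + ↑g₂ * u.2.2)
        - τ ((↑g₁ : M), (↑g₂ : M)) (u.1, u.2.1) = 0) :
    letI κ : Mˣ → M → V := fun g v =>
      τ ((↑g⁻¹ : M), (1 : M)) (0, v) + τ ((↑g⁻¹ : M), (↑g : M)) ((↑g⁻¹ : M) * v, 0)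
    ∀ (g₁ g₂ : Mˣ) (v : M),
      κ (g₁ * g₂) v = κ g₁ v + κ g₂ ((↑g₁⁻¹ : M) * v * ↑g₁) := by
  intro g₁ g₂ v
  set w : M := (↑g₁⁻¹ : M) * v * ↑g₁ with hw
  set s : M := (↑g₂⁻¹ : M) * ((↑g₁⁻¹ : M) * v * ↑g₁) * ↑g₂ with hs
  have E1 := hτ 1 1 1 (0, 0, w)
  have E2 := hτ g₁⁻¹ g₁ 1 (0, 0, w)
  have E3 := hτ g₂⁻¹ g₂ 1 (0, 0, s)
  have E4 := hτ (g₁*g₂)⁻¹ (g₁*g₂) 1 (0, 0, s)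
  have E5 := hτ g₁ g₂ 1 (0, 0, s)
  have E6 := hτ g₁⁻¹ 1 g₁ (0, v, 0)
  have E7 := hτ g₂⁻¹ 1 g₂ (0, w, 0)
  have E8 := hτ (g₁*g₂)⁻¹ 1 (g₁*g₂) (0, v, 0)
  have E9 := hτ g₁ 1 g₂ (0, w, 0)
  have E10 := hτ 1 g₁ g₂ (v, 0, 0)
  simp only [hw, hs, Units.val_one, Units.val_mul, mul_inv_rev, one_mul, mul_one, zero_mul,
    mul_zero, add_zero, zero_add, Units.inv_mul, Units.mul_inv, Units.inv_mul_cancel_left,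
    Units.mul_inv_cancel_left, mul_assoc, Prod.mk_zero_zero, map_zero, sub_zero] at *
  linear_combination (norm := abel) E4 + E5 + E6 + E7 + E10 - E1 - E2 - E3 - E8 - E9
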